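/- Let Φ be a root system with simple roots Π and Weyl group longest element w₀, let ρ be the half-sum of positive roots, p a prime, r ≥ 1, and γ a dominant weight. If λ, μ are p^r-restricted dominant weights such that 2(p^r−1)ρ + w₀λ > 2(p^r−1)ρ + w₀μ + p^r γ in the dominance order, then μ >_ℚ λ in the rational order. -/

import Mathlib

theorem aux_dom {V : Type*} [AddCommGroup V] [Module ℚ V]
    (B : V →ₗ[ℚ] V →ₗ[ℚ] ℚ)
    (hsymm : ∀ x y : V, B x y = B y x)
    (hposdef : ∀ x : V, x ≠ 0 → 0 < B x x)
    (Δ : Finset V)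
    (hspan : Submodule.span ℚ (Δ : Set V) = ⊤)
    (hobtuse : ∀ α ∈ Δ, ∀ β ∈ Δ, α ≠ β → B α β ≤ 0)
    (ν : V) (hν : ∀ α ∈ Δ, 0 ≤ B ν α) :
    ∃ q : V → ℚ, (∀ α ∈ Δ, 0 ≤ q α) ∧ ν = ∑ α ∈ Δ, q α • α := by
  obtain ⟨f, -, hf⟩ := Submodule.mem_span_finset.mp
    (by rw [hspan]; trivial : ν ∈ Submodule.span ℚ (Δ : Set V))
  set fm : V → ℚ := fun α => min (f α) 0 with hfm
  set fp : V → ℚ := fun α => max (f α) 0 with hfp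
  set νm := ∑ α ∈ Δ, fm α • α with hνm
  set νp := ∑ α ∈ Δ, fp α • α with hνp
  have hsplit : ν = νm + νp := by
    rw [hνm, hνp, ← Finset.sum_add_distrib, ← hf]
    refine Finset.sum_congr rfl fun α _ => ?_
    rw [← add_smul]
    congr 1
    simp [hfm, hfp, min_add_max]
  have hBsum : ∀ (g : V → ℚ) (y : V),
      B (∑ α ∈ Δ, g α • α) y = ∑ α ∈ Δ, g α * B α y := by
    intro g y
    rw [map_sum, LinearMap.sum_apply]
    simp [smul_eq_mul]
  have h1 : B νm ν ≤ 0 := by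
    rw [hνm, hBsum]
    apply Finset.sum_nonpos
    intro α hα
    have : fm α ≤ 0 := min_le_right _ _
    have h2 : 0 ≤ B α ν := by rw [hsymm]; exact hν α hα
    exact mul_nonpos_of_nonpos_of_nonneg this h2
  have h2 : 0 ≤ B νm νp := by
    rw [hνm, hBsum]
    apply Finset.sum_nonneg
    intro α hα
    have hα2 : (B α) νp = ∑ β ∈ Δ, fp β * B α β := by
      rw [hνp, map_sum]
      simp [smul_eq_mul, hsymm α]
    rw [hα2, Finset.mul_sum]
    apply Finset.sum_nonneg
    intro β hβ
    rcases eq_or_ne α β with rfl | hne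
    · have : fm α * fp α = 0 := by
        rcases le_total (f α) 0 with h | h
        · simp [hfm, hfp, max_eq_right h]
        · simp [hfm, hfp, min_eq_right h]
      have := mul_eq_zero_of_left this (B α α)
      nlinarith [this]
    · have ha : fm α ≤ 0 := min_le_right _ _
      have hb : 0 ≤ fp β := le_max_right _ _
      have hab : B α β ≤ 0 := hobtuse α hα β hβ hne
      have h3 : fp β * B α β ≤ 0 := by nlinarith
      nlinarith [mul_nonneg (neg_nonneg.2 ha) (neg_nonneg.2 h3)]
  have hmm : B νm νm ≤ 0 := by
    have : B νm ν = B νm νm + B νm νp := by rw [hsplit, map_add]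
    linarith
  have hzero : νm = 0 := by
    by_contra h
    exact absurd hmm (not_le.mpr (hposdef νm h))
  refine ⟨fp, fun α _ => le_max_right _ _, ?_⟩
  rw [hsplit, hzero, zero_add]

/-- Let `Δ` be a base of a root system in a rational vector space `V`
equipped with a positive-definite symmetric invariant form `B`; write
`⟨lam, α∨⟩ = 2 B lam α / B α α`.  Let `w₀` be the longest element of the Weyl group
(an involutive isometry with `-w₀` permuting the simple roots), let `ρ` be the half-sum
of the positive roots, `p` a prime and `r ≥ 1`, and let `γ` be a dominant weight.  If
`lam, mu` are `p^r`-restricted dominant weights such that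
`2(p^r-1)ρ + w₀ lam > 2(p^r-1)ρ + w₀ mu + p^r γ` in the dominance order (the difference
is a nonzero nonnegative integer combination of simple roots), then `mu >_ℚ lam` in the
rational order (`mu - lam` is a nonzero nonnegative rational combination of simple
roots). -/
theorem stmt_3 {V : Type*} [AddCommGroup V] [Module ℚ V]
    (B : V →ₗ[ℚ] V →ₗ[ℚ] ℚ)
    (hsymm : ∀ x y : V, B x y = B y x)
    (hposdef : ∀ x : V, x ≠ 0 → 0 < B x x)
    (Δ : Finset V)
    (hindep : LinearIndependent ℚ (fun a : Δ => (a : V)))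
    (hspan : Submodule.span ℚ (Δ : Set V) = ⊤)
    (hobtuse : ∀ α ∈ Δ, ∀ β ∈ Δ, α ≠ β → B α β ≤ 0)
    (w₀ : V →ₗ[ℚ] V)
    (hinv : ∀ v, w₀ (w₀ v) = v)
    (hperm : ∀ α ∈ Δ, -(w₀ α) ∈ Δ)
    (horth : ∀ x y : V, B (w₀ x) (w₀ y) = B x y)
    (ρ : V)
    (hρ : ∀ α ∈ Δ, 2 * B ρ α = B α α)
    (p r : ℕ) (hp : p.Prime) (hr : 1 ≤ r)
    (γ : V) (hγ : ∀ α ∈ Δ, 0 ≤ B γ α)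
    (lam mu : V)
    (hlam : ∀ α ∈ Δ, 0 ≤ 2 * B lam α / B α α ∧ 2 * B lam α / B α α < (p : ℚ) ^ r)
    (hmu : ∀ α ∈ Δ, 0 ≤ 2 * B mu α / B α α ∧ 2 * B mu α / B α α < (p : ℚ) ^ r)
    (hgt : ∃ c : V → ℕ,
      ((2 * ((p : ℚ) ^ r - 1)) • ρ + w₀ lam) -
        ((2 * ((p : ℚ) ^ r - 1)) • ρ + w₀ mu + ((p : ℚ) ^ r) • γ) = ∑ α ∈ Δ, (c α : ℚ) • α ∧
      ((2 * ((p : ℚ) ^ r - 1)) • ρ + w₀ lam) ≠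
        ((2 * ((p : ℚ) ^ r - 1)) • ρ + w₀ mu + ((p : ℚ) ^ r) • γ)) :
    ∃ q : V → ℚ, (∀ α ∈ Δ, 0 ≤ q α) ∧ mu - lam = ∑ α ∈ Δ, q α • α ∧ mu ≠ lam := by
  obtain ⟨c, hc, hne⟩ := hgt
  set P : ℚ := (p : ℚ) ^ r with hPdef
  have hP : 0 < P := pow_pos (by exact_mod_cast hp.pos) r
  set δ : V := w₀ lam - w₀ mu - P • γ with hδdef
  have hδeq : δ = ∑ α ∈ Δ, (c α : ℚ) • α := by
    rw [← hc, hδdef]; abel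
  have hδne : δ ≠ 0 := by
    have h := sub_ne_zero.mpr hne
    have h2 : ((2 * ((p : ℚ) ^ r - 1)) • ρ + w₀ lam) -
        ((2 * ((p : ℚ) ^ r - 1)) • ρ + w₀ mu + ((p : ℚ) ^ r) • γ) = δ := by
      rw [hδdef]; abel
    rwa [h2] at h
  -- mu ≠ lam
  have hmune : mu ≠ lam := by
    intro h
    have hδg : δ = -(P • γ) := by rw [hδdef, h]; abel
    have hBle : B δ δ ≤ 0 := by
      nth_rewrite 2 [hδeq]
      rw [map_sum]
      apply Finset.sum_nonpos
      intro α hα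
      rw [map_smul, smul_eq_mul]
      have hBδα : B δ α = -(P * B γ α) := by
        rw [hδg, map_neg, map_smul]
        simp [smul_eq_mul]
      rw [hBδα]
      have h0 := hγ α hα
      have hcn : (0:ℚ) ≤ (c α : ℚ) := Nat.cast_nonneg _
      nlinarith [mul_nonneg hcn (mul_nonneg hP.le h0)]
    exact absurd hBle (not_le.mpr (hposdef δ hδne))
  -- dominance of -(w₀ γ)
  have hdom : ∀ α ∈ Δ, 0 ≤ B (-(w₀ γ)) α := by
    intro α hα
    have h1 := hγ _ (hperm α hα)
    rw [← horth (-(w₀ γ)) α, map_neg, hinv]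
    simpa [map_neg] using h1
  obtain ⟨qγ, hqγ0, hqγ⟩ := aux_dom B hsymm hposdef Δ hspan hobtuse _ hdom
  refine ⟨fun β => (c (-(w₀ β)) : ℚ) + P * qγ β, fun α hα =>
    add_nonneg (Nat.cast_nonneg _) (mul_nonneg hP.le (hqγ0 α hα)), ?_, hmune⟩
  have hw : w₀ δ = lam - mu - P • w₀ γ := by
    rw [hδdef, map_sub, map_sub, map_smul, hinv, hinv]
  have hre : ∑ α ∈ Δ, (c α : ℚ) • (-(w₀ α)) = ∑ β ∈ Δ, (c (-(w₀ β)) : ℚ) • β := by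
    refine Finset.sum_nbij' (fun α => -(w₀ α)) (fun β => -(w₀ β)) hperm hperm
      (fun α _ => by simp [hinv]) (fun β _ => by simp [hinv]) (fun α _ => by simp [hinv])
  have key : mu - lam = (∑ α ∈ Δ, (c α : ℚ) • (-(w₀ α))) + P • (-(w₀ γ)) := by
    have h3 : ∑ α ∈ Δ, (c α : ℚ) • (-(w₀ α)) = -(w₀ (∑ α ∈ Δ, (c α : ℚ) • α)) := by
      rw [map_sum, ← Finset.sum_neg_distrib]
      · exact Finset.sum_congr rfl fun α _ => by rw [map_smul, smul_neg]
    rw [h3, ← hδeq, hw, smul_neg]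
    abel
  rw [key, hre, hqγ, Finset.smul_sum, ← Finset.sum_add_distrib]
  refine Finset.sum_congr rfl fun β _ => ?_
  rw [add_smul, smul_smul]
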